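/- Let p be an odd prime, k ≥ 2, ζ a primitive p^k-th root of unity, and H = [ζ^{a_{ij}}] an n×n normalized Butson-Hadamard matrix BH(n, p^k). Let H' be the n × n·p^{k-1} matrix over ℤ_p obtained by applying the Gray map G₂ to each exponent a_{ij}. Then the Hamming distance between any two distinct rows of H' equals exactly n(p−1)p^{k-2}; in particular the code is equidistant with minimum distance d = n(p−1)p^{k-2}. -/

import Mathlib

/-- The generalized Gray map `G₂ : ℤ_{p^k} → ℤ_p^{p^{k-1}}`: for `0 ≤ u ≤ p^{k-1}` it is `1`
in the first `u` coordinates and `0` elsewhere, and `G₂(q·p^{k-1} + r) = (q,…,q) + G₂(r)`. -/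
def G2 (p k : ℕ) [NeZero (p ^ k)] (u : ZMod (p ^ k)) : Fin (p ^ (k - 1)) → ZMod p :=
  fun t => ((u.val / p ^ (k - 1) : ℕ) : ZMod p) +
    if (t : ℕ) < u.val % p ^ (k - 1) then 1 else 0

lemma natmod_eq_of_zmod {m a b : ℕ} (hb : b < m) (h : (a : ZMod m) = (b : ZMod m)) :
    a % m = b := by
  have := congrArg ZMod.val h
  rwa [ZMod.val_natCast, ZMod.val_natCast, Nat.mod_eq_of_lt hb] at this

lemma adig_eq (m : ℕ) (hm : 0 < m) (x a : ℕ) (ha : a < m) :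
    (x + (a + (m - x % m)) % m) % m = a := by
  rw [Nat.add_mod_mod]
  have h1 : m * (x / m) + x % m = x := Nat.div_add_mod _ _
  have h2 : x % m < m := Nat.mod_lt _ hm
  rw [show x + (a + (m - x % m)) = m * (x / m) + m + a by omega,
    show m * (x / m) + m + a = m * (x / m + 1) + a by ring,
    Nat.mul_add_mod, Nat.mod_eq_of_lt ha]

lemma sdig_eq (m : ℕ) (hm : 0 < m) (x s : ℕ) (hs : s < m) :
    ((x + s) % m + (m - x % m)) % m = s := by
  rw [Nat.mod_add_mod]
  have h1 : m * (x / m) + x % m = x := Nat.div_add_mod _ _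
  have h2 : x % m < m := Nat.mod_lt _ hm
  rw [show x + s + (m - x % m) = m * (x / m) + m + s by omega,
    show m * (x / m) + m + s = m * (x / m + 1) + s by ring,
    Nat.mul_add_mod, Nat.mod_eq_of_lt hs]

lemma bdig_eq (p k : ℕ) [NeZero (p ^ k)] (hk : 1 ≤ k) (u v : ZMod (p ^ k)) (a b : ℕ)
    (hb : b < p ^ (k - 1))
    (hab : (a : ZMod (p ^ k)) - b = u - v) :
    (v.val + (a + (p ^ (k - 1) - u.val % p ^ (k - 1))) % p ^ (k - 1)) % p ^ (k - 1) = b := by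
  have hdvd : p ^ (k - 1) ∣ p ^ k := pow_dvd_pow p (by omega)
  have hp0 : 0 < p := by
    rcases Nat.eq_zero_or_pos p with h | h
    · exact absurd (by simp [h, Nat.zero_pow (by omega : 0 < k)]) (NeZero.ne (p ^ k))
    · exact h
  have hm0 : 0 < p ^ (k - 1) := pow_pos hp0 _
  apply natmod_eq_of_zmod hb
  have hphi : ∀ w : ZMod (p ^ k),
      ((w.val : ℕ) : ZMod (p ^ (k - 1))) = ZMod.castHom hdvd (ZMod (p ^ (k - 1))) w :=
    fun w => by rw [ZMod.natCast_val, ZMod.castHom_apply]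
  have hab' : (a : ZMod (p ^ (k - 1))) - b =
      ZMod.castHom hdvd (ZMod (p ^ (k - 1))) u - ZMod.castHom hdvd (ZMod (p ^ (k - 1))) v := by
    have := congrArg (ZMod.castHom hdvd (ZMod (p ^ (k - 1)))) hab
    simpa [map_sub] using this
  have hru : u.val % p ^ (k - 1) ≤ p ^ (k - 1) := le_of_lt (Nat.mod_lt _ hm0)
  have hps : ((p : ZMod (p ^ (k - 1)))) ^ (k - 1) = 0 := by
    rw [← Nat.cast_pow, ZMod.natCast_self]
  push_cast [ZMod.natCast_mod, Nat.cast_sub hru, ZMod.natCast_self]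
  rw [hphi u, hphi v] at *
  rw [hps]
  linear_combination hab'

lemma G2_eq_div (p k : ℕ) [NeZero (p ^ k)] (u : ZMod (p ^ k)) (t : Fin (p ^ (k - 1))) :
    G2 p k u t = (((u.val + (p ^ (k - 1) - 1 - (t : ℕ))) / p ^ (k - 1) : ℕ) : ZMod p) := by
  have hm0 : 0 < p ^ (k - 1) := t.pos
  have ht : (t : ℕ) < p ^ (k - 1) := t.isLt
  have hqr : p ^ (k - 1) * (u.val / p ^ (k - 1)) + u.val % p ^ (k - 1) = u.val :=
    Nat.div_add_mod _ _
  have hr : u.val % p ^ (k - 1) < p ^ (k - 1) := Nat.mod_lt _ hm0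
  have hrw : u.val + (p ^ (k - 1) - 1 - (t : ℕ)) =
      p ^ (k - 1) * (u.val / p ^ (k - 1)) +
        (u.val % p ^ (k - 1) + (p ^ (k - 1) - 1 - (t : ℕ))) := by omega
  rw [G2, hrw, Nat.mul_add_div hm0]
  by_cases hc : (t : ℕ) < u.val % p ^ (k - 1)
  · have h1 : (u.val % p ^ (k - 1) + (p ^ (k - 1) - 1 - (t : ℕ))) / p ^ (k - 1) = 1 :=
      Nat.div_eq_of_lt_le (by omega) (by omega)
    rw [h1, if_pos hc]
    push_cast
    ring
  · have h0 : (u.val % p ^ (k - 1) + (p ^ (k - 1) - 1 - (t : ℕ))) / p ^ (k - 1) = 0 :=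
      Nat.div_eq_of_lt (by omega)
    rw [h0, if_neg hc]
    push_cast
    ring

lemma dig_decomp (p k : ℕ) [NeZero (p ^ k)] (hk : 1 ≤ k) (w : ZMod (p ^ k)) (s : ℕ) :
    (((w.val + s) % p ^ (k - 1) : ℕ) : ZMod (p ^ k)) =
      w + (s : ℕ) - ((p ^ (k - 1) * ((w.val + s) % p ^ k / p ^ (k - 1)) : ℕ) : ZMod (p ^ k)) := by
  have hdvd : p ^ (k - 1) ∣ p ^ k := pow_dvd_pow p (by omega)
  have h1 : (w.val + s) % p ^ (k - 1) = ((w.val + s) % p ^ k) % p ^ (k - 1) :=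
    (Nat.mod_mod_of_dvd _ hdvd).symm
  have h2 : p ^ (k - 1) * ((w.val + s) % p ^ k / p ^ (k - 1)) +
      ((w.val + s) % p ^ k) % p ^ (k - 1) = (w.val + s) % p ^ k := Nat.div_add_mod _ _
  have h3 : (((w.val + s) % p ^ k : ℕ) : ZMod (p ^ k)) = w + (s : ℕ) := by
    rw [ZMod.natCast_mod, Nat.cast_add, ZMod.natCast_val, ZMod.cast_id]
  have h4 := congrArg (fun x : ℕ => (x : ZMod (p ^ k))) h2
  simp only [Nat.cast_add] at h4
  rw [h3] at h4
  rw [h1]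
  linear_combination h4

lemma fdig_lt (p k : ℕ) (hp : 0 < p) (hk : 1 ≤ k) (x : ℕ) :
    x % p ^ k / p ^ (k - 1) < p := by
  have hpk : p ^ k = p ^ (k - 1) * p := by rw [← pow_succ]; congr 1; omega
  have hm0 : 0 < p ^ (k - 1) := pow_pos hp _
  rw [Nat.div_lt_iff_lt_mul hm0, show p * p ^ (k - 1) = p ^ k by rw [hpk]; ring]
  exact Nat.mod_lt x (pow_pos hp k)

lemma G2_eq_fdig (p k : ℕ) [NeZero (p ^ k)] (hk : 1 ≤ k) (w : ZMod (p ^ k))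
    (t : Fin (p ^ (k - 1))) :
    G2 p k w t =
      (((w.val + (p ^ (k - 1) - 1 - (t : ℕ))) % p ^ k / p ^ (k - 1) : ℕ) : ZMod p) := by
  have hpk : p ^ k = p ^ (k - 1) * p := by rw [← pow_succ]; congr 1; omega
  rw [G2_eq_div, show (w.val + (p ^ (k - 1) - 1 - (t : ℕ))) % p ^ k
      = (w.val + (p ^ (k - 1) - 1 - (t : ℕ))) % (p ^ (k - 1) * p) by rw [← hpk],
    Nat.mod_mul_right_div_self, ZMod.natCast_mod]

lemma count_eq (p k : ℕ) [NeZero (p ^ k)] (hk : 1 ≤ k) (u v : ZMod (p ^ k)) :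
    (Finset.univ.filter fun t : Fin (p ^ (k - 1)) => G2 p k u t = G2 p k v t).card
      = (Finset.univ.filter fun ab : Fin (p ^ (k - 1)) × Fin (p ^ (k - 1)) =>
          ((ab.1 : ℕ) : ZMod (p ^ k)) - ((ab.2 : ℕ) : ZMod (p ^ k)) = u - v).card := by
  have hp0 : 0 < p := by
    rcases Nat.eq_zero_or_pos p with h | h
    · exact absurd (by simp [h, Nat.zero_pow (by omega : 0 < k)]) (NeZero.ne (p ^ k))
    · exact h
  have hm0 : 0 < p ^ (k - 1) := pow_pos hp0 _
  have hG2iff : ∀ (w z : ZMod (p ^ k)) (t : Fin (p ^ (k - 1))),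
      G2 p k w t = G2 p k z t ↔
        (w.val + (p ^ (k - 1) - 1 - (t : ℕ))) % p ^ k / p ^ (k - 1)
          = (z.val + (p ^ (k - 1) - 1 - (t : ℕ))) % p ^ k / p ^ (k - 1) := by
    intro w z t
    rw [G2_eq_fdig p k hk w t, G2_eq_fdig p k hk z t]
    constructor
    · intro h
      have := natmod_eq_of_zmod (fdig_lt p k hp0 hk _) h
      rwa [Nat.mod_eq_of_lt (fdig_lt p k hp0 hk _)] at this
    · intro h; rw [h]
  refine Finset.card_bij'
    (fun t _ => (⟨(u.val + (p ^ (k - 1) - 1 - (t : ℕ))) % p ^ (k - 1), Nat.mod_lt _ hm0⟩,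
                 ⟨(v.val + (p ^ (k - 1) - 1 - (t : ℕ))) % p ^ (k - 1), Nat.mod_lt _ hm0⟩))
    (fun ab _ => ⟨p ^ (k - 1) - 1 -
        (((ab.1 : ℕ) + (p ^ (k - 1) - u.val % p ^ (k - 1))) % p ^ (k - 1)),
        (Nat.sub_le _ _).trans_lt (Nat.sub_lt hm0 Nat.one_pos)⟩)
    ?_ ?_ ?_ ?_
  · intro t ht
    simp only [Finset.mem_filter, Finset.mem_univ, true_and] at ht ⊢
    have hF := (hG2iff u v t).mp ht
    rw [dig_decomp p k hk u _, dig_decomp p k hk v _, hF]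
    ring
  · intro ab hab
    simp only [Finset.mem_filter, Finset.mem_univ, true_and] at hab ⊢
    have ha : (ab.1 : ℕ) < p ^ (k - 1) := ab.1.isLt
    have hb : (ab.2 : ℕ) < p ^ (k - 1) := ab.2.isLt
    obtain ⟨s0, hs0def⟩ : ∃ s0, (((ab.1 : ℕ) + (p ^ (k - 1) - u.val % p ^ (k - 1)))
        % p ^ (k - 1)) = s0 := ⟨_, rfl⟩
    have hs0 : s0 < p ^ (k - 1) := hs0def ▸ Nat.mod_lt _ hm0
    rw [hG2iff]
    simp only [hs0def]
    have hts : p ^ (k - 1) - 1 - (p ^ (k - 1) - 1 - s0) = s0 :=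
      Nat.sub_sub_self (Nat.le_pred_of_lt hs0)
    rw [hts]
    have ha' : (u.val + s0) % p ^ (k - 1) = (ab.1 : ℕ) := by
      rw [← hs0def]; exact adig_eq (p ^ (k - 1)) hm0 u.val (ab.1 : ℕ) ha
    have hb' : (v.val + s0) % p ^ (k - 1) = (ab.2 : ℕ) := by
      rw [← hs0def]; exact bdig_eq p k hk u v (ab.1 : ℕ) (ab.2 : ℕ) hb hab
    have d1 := dig_decomp p k hk u s0
    rw [ha'] at d1
    have d2 := dig_decomp p k hk v s0
    rw [hb'] at d2
    have hcast : ((p ^ (k - 1) * ((u.val + s0) % p ^ k / p ^ (k - 1)) : ℕ) : ZMod (p ^ k))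
        = ((p ^ (k - 1) * ((v.val + s0) % p ^ k / p ^ (k - 1)) : ℕ) : ZMod (p ^ k)) := by
      linear_combination d1 - d2 - hab
    have hlt1 : p ^ (k - 1) * ((u.val + s0) % p ^ k / p ^ (k - 1)) < p ^ k := by
      calc p ^ (k - 1) * ((u.val + s0) % p ^ k / p ^ (k - 1))
          < p ^ (k - 1) * p := (Nat.mul_lt_mul_left hm0).mpr (fdig_lt p k hp0 hk _)
        _ = p ^ k := by rw [← pow_succ]; congr 1; omega
    have hlt2 : p ^ (k - 1) * ((v.val + s0) % p ^ k / p ^ (k - 1)) < p ^ k := by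
      calc p ^ (k - 1) * ((v.val + s0) % p ^ k / p ^ (k - 1))
          < p ^ (k - 1) * p := (Nat.mul_lt_mul_left hm0).mpr (fdig_lt p k hp0 hk _)
        _ = p ^ k := by rw [← pow_succ]; congr 1; omega
    have hval := congrArg ZMod.val hcast
    rw [ZMod.val_cast_of_lt hlt1, ZMod.val_cast_of_lt hlt2] at hval
    exact Nat.eq_of_mul_eq_mul_left hm0 hval
  · intro t ht
    apply Fin.ext
    simp only
    rw [sdig_eq (p ^ (k - 1)) hm0 u.val (p ^ (k - 1) - 1 - (t : ℕ))
      ((Nat.sub_le _ _).trans_lt (Nat.sub_lt hm0 Nat.one_pos))]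
    have hts : p ^ (k - 1) - 1 - (p ^ (k - 1) - 1 - (t : ℕ)) = (t : ℕ) :=
      Nat.sub_sub_self (Nat.le_pred_of_lt t.isLt)
    exact hts
  · intro ab hab
    simp only [Finset.mem_filter, Finset.mem_univ, true_and] at hab
    have ha : (ab.1 : ℕ) < p ^ (k - 1) := ab.1.isLt
    have hb : (ab.2 : ℕ) < p ^ (k - 1) := ab.2.isLt
    obtain ⟨s0, hs0def⟩ : ∃ s0, (((ab.1 : ℕ) + (p ^ (k - 1) - u.val % p ^ (k - 1)))
        % p ^ (k - 1)) = s0 := ⟨_, rfl⟩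
    have hs0 : s0 < p ^ (k - 1) := hs0def ▸ Nat.mod_lt _ hm0
    have hts : p ^ (k - 1) - 1 - (p ^ (k - 1) - 1 - s0) = s0 :=
      Nat.sub_sub_self (Nat.le_pred_of_lt hs0)
    have e1 : (u.val + s0) % p ^ (k - 1) = (ab.1 : ℕ) := by
      rw [← hs0def]; exact adig_eq (p ^ (k - 1)) hm0 u.val (ab.1 : ℕ) ha
    have e2 : (v.val + s0) % p ^ (k - 1) = (ab.2 : ℕ) := by
      rw [← hs0def]; exact bdig_eq p k hk u v (ab.1 : ℕ) (ab.2 : ℕ) hb hab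
    apply Prod.ext
    · apply Fin.ext
      show (u.val + (p ^ (k - 1) - 1 - (p ^ (k - 1) - 1 -
        ((ab.1 : ℕ) + (p ^ (k - 1) - u.val % p ^ (k - 1))) % p ^ (k - 1)))) % p ^ (k - 1)
        = (ab.1 : ℕ)
      rw [hs0def, hts]
      exact e1
    · apply Fin.ext
      show (v.val + (p ^ (k - 1) - 1 - (p ^ (k - 1) - 1 -
        ((ab.1 : ℕ) + (p ^ (k - 1) - u.val % p ^ (k - 1))) % p ^ (k - 1)))) % p ^ (k - 1)
        = (ab.2 : ℕ)
      rw [hs0def, hts]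
      exact e2



section four
variable (p k : ℕ) [NeZero (p ^ k)] (ζ : ℂ)

lemma char_sum (hζ : IsPrimitiveRoot ζ (p ^ k)) (w : ZMod (p ^ k)) :
    ∑ t : ZMod (p ^ k), ζ ^ (t * w).val = if w = 0 then ((p ^ k : ℕ) : ℂ) else 0 := by
  split_ifs with h
  · subst h
    simp only [mul_zero, ZMod.val_zero, pow_zero]
    rw [Finset.sum_const, Finset.card_univ, ZMod.card]
    simp
  · have hx1 : ζ ^ w.val ≠ 1 :=
      hζ.pow_ne_one_of_pos_of_lt (ZMod.val_pos.mpr h).ne' (ZMod.val_lt w)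
    have hxM : (ζ ^ w.val) ^ (p ^ k) = 1 := by
      rw [← pow_mul, mul_comm, pow_mul, hζ.pow_eq_one, one_pow]
    calc ∑ t : ZMod (p ^ k), ζ ^ (t * w).val
        = ∑ t : ZMod (p ^ k), (ζ ^ w.val) ^ t.val := by
          refine Finset.sum_congr rfl fun t _ => ?_
          rw [ZMod.val_mul, ← pow_eq_pow_mod _ hζ.pow_eq_one, mul_comm t.val, pow_mul]
      _ = ∑ i ∈ Finset.range (p ^ k), (ζ ^ w.val) ^ i := by
          refine Finset.sum_nbij' (fun t => t.val) (fun i => (i : ZMod (p ^ k)))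
            (fun t _ => Finset.mem_range.mpr (ZMod.val_lt t)) (fun i _ => Finset.mem_univ _)
            (fun t _ => by simp [ZMod.natCast_val, ZMod.cast_id])
            (fun i hi => ZMod.val_cast_of_lt (Finset.mem_range.mp hi)) (fun t _ => rfl)
      _ = 0 := by rw [geom_sum_eq hx1, hxM]; simp

lemma col_sum_zero (hk : 1 ≤ k) (hζ : IsPrimitiveRoot ζ (p ^ k)) (t : ZMod (p ^ k))
    (ht0 : t ≠ 0) (htp : p ∣ t.val) :
    ∑ b : Fin (p ^ (k - 1)), ζ ^ (t * ((b : ℕ) : ZMod (p ^ k))).val = 0 := by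
  have hp0 : 0 < p := by
    rcases Nat.eq_zero_or_pos p with h | h
    · exact absurd (by simp [h, Nat.zero_pow (by omega : 0 < k)]) (NeZero.ne (p ^ k))
    · exact h
  have hmM : p ^ (k - 1) ≤ p ^ k := Nat.pow_le_pow_right hp0 (by omega)
  have hx1 : ζ ^ t.val ≠ 1 :=
    hζ.pow_ne_one_of_pos_of_lt (ZMod.val_pos.mpr ht0).ne' (ZMod.val_lt t)
  obtain ⟨c, hc⟩ := htp
  have hxm : (ζ ^ t.val) ^ (p ^ (k - 1)) = 1 := by
    rw [← pow_mul, hc, show p * c * p ^ (k - 1) = p ^ k * c by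
      rw [show p ^ k = p ^ (k - 1) * p by rw [← pow_succ]; congr 1; omega]; ring,
      pow_mul, hζ.pow_eq_one, one_pow]
  calc ∑ b : Fin (p ^ (k - 1)), ζ ^ (t * ((b : ℕ) : ZMod (p ^ k))).val
      = ∑ b : Fin (p ^ (k - 1)), (ζ ^ t.val) ^ (b : ℕ) := by
        refine Finset.sum_congr rfl fun b _ => ?_
        rw [ZMod.val_mul, ← pow_eq_pow_mod _ hζ.pow_eq_one,
          ZMod.val_cast_of_lt (lt_of_lt_of_le b.isLt hmM), pow_mul]
    _ = ∑ i ∈ Finset.range (p ^ (k - 1)), (ζ ^ t.val) ^ i := Fin.sum_univ_eq_sum_range _ _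
    _ = 0 := by rw [geom_sum_eq hx1, hxm]; simp

lemma row_sum_zero {n : ℕ} (hp : p.Prime) (hζ : IsPrimitiveRoot ζ (p ^ k))
    (δ : Fin n → ZMod (p ^ k)) (h1 : ∑ l, ζ ^ (δ l).val = 0) (t : ZMod (p ^ k))
    (htp : ¬ p ∣ t.val) :
    ∑ l, ζ ^ (t * δ l).val = 0 := by
  have hMpos : 0 < p ^ k := pow_pos hp.pos k
  have hcop : (t.val).Coprime (p ^ k) :=
    Nat.Coprime.pow_right _ ((hp.coprime_iff_not_dvd.mpr htp).symm)
  have hξ : IsPrimitiveRoot (ζ ^ t.val) (p ^ k) := hζ.pow_of_coprime _ hcop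
  have haQ : (Polynomial.aeval ζ) (∑ l : Fin n, Polynomial.X ^ (δ l).val : Polynomial ℚ) = 0 := by
    simpa using h1
  have hdvd : minpoly ℚ ζ ∣ (∑ l : Fin n, Polynomial.X ^ (δ l).val : Polynomial ℚ) :=
    minpoly.dvd ℚ ζ haQ
  rw [← Polynomial.cyclotomic_eq_minpoly_rat hζ hMpos] at hdvd
  obtain ⟨R, hR⟩ := hdvd
  have haξ : (Polynomial.aeval (ζ ^ t.val))
      (∑ l : Fin n, Polynomial.X ^ (δ l).val : Polynomial ℚ) = 0 := by
    rw [hR, map_mul]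
    have hzero : (Polynomial.aeval (ζ ^ t.val)) (Polynomial.cyclotomic (p ^ k) ℚ) = 0 := by
      rw [Polynomial.aeval_def, ← Polynomial.eval_map, Polynomial.map_cyclotomic]
      exact hξ.isRoot_cyclotomic hMpos
    rw [hzero, zero_mul]
  calc ∑ l, ζ ^ (t * δ l).val
      = ∑ l, (ζ ^ t.val) ^ (δ l).val := by
        refine Finset.sum_congr rfl fun l _ => ?_
        rw [ZMod.val_mul, ← pow_eq_pow_mod _ hζ.pow_eq_one, pow_mul]
    _ = 0 := by simpa using haξ

end four

lemma sum_pairs (p k n : ℕ) [NeZero (p ^ k)] (hp : p.Prime) (hk : 2 ≤ k) (ζ : ℂ)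
    (hζ : IsPrimitiveRoot ζ (p ^ k)) (δ : Fin n → ZMod (p ^ k))
    (h1 : ∑ l, ζ ^ (δ l).val = 0) :
    ∑ l : Fin n, (Finset.univ.filter fun ab : Fin (p ^ (k - 1)) × Fin (p ^ (k - 1)) =>
        ((ab.1 : ℕ) : ZMod (p ^ k)) - ((ab.2 : ℕ) : ZMod (p ^ k)) = δ l).card
      = n * p ^ (k - 2) := by
  have hk1 : 1 ≤ k := by omega
  have hMpos : 0 < p ^ k := pow_pos hp.pos k
  have eadd : ∀ x y : ZMod (p ^ k), ζ ^ (x + y).val = ζ ^ x.val * ζ ^ y.val := fun x y => by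
    rw [ZMod.val_add, ← pow_eq_pow_mod _ hζ.pow_eq_one, pow_add]
  have key : ((∑ l : Fin n, (Finset.univ.filter
        fun ab : Fin (p ^ (k - 1)) × Fin (p ^ (k - 1)) =>
        ((ab.1 : ℕ) : ZMod (p ^ k)) - ((ab.2 : ℕ) : ZMod (p ^ k)) = δ l).card : ℕ) : ℂ)
        * ((p ^ k : ℕ) : ℂ)
      = (n : ℂ) * (((p ^ (k - 1) : ℕ) : ℂ) * ((p ^ (k - 1) : ℕ) : ℂ)) := by
    have step1 : ∀ l : Fin n,
        (((Finset.univ.filter fun ab : Fin (p ^ (k - 1)) × Fin (p ^ (k - 1)) =>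
          ((ab.1 : ℕ) : ZMod (p ^ k)) - ((ab.2 : ℕ) : ZMod (p ^ k)) = δ l).card : ℕ) : ℂ)
          * ((p ^ k : ℕ) : ℂ)
        = ∑ ab : Fin (p ^ (k - 1)) × Fin (p ^ (k - 1)),
            ∑ t : ZMod (p ^ k),
              ζ ^ (t * (δ l + ((ab.2 : ℕ) : ZMod (p ^ k)) - ((ab.1 : ℕ) : ZMod (p ^ k)))).val := by
      intro l
      rw [Finset.card_filter, Nat.cast_sum, Finset.sum_mul]
      refine Finset.sum_congr rfl fun ab _ => ?_
      have hiff : (((ab.1 : ℕ) : ZMod (p ^ k)) - ((ab.2 : ℕ) : ZMod (p ^ k)) = δ l)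
          ↔ (δ l + ((ab.2 : ℕ) : ZMod (p ^ k)) - ((ab.1 : ℕ) : ZMod (p ^ k)) = 0) := by
        constructor <;> intro h <;> linear_combination -h
      rw [Nat.cast_ite, Nat.cast_one, Nat.cast_zero, ite_mul, one_mul, zero_mul,
        if_congr hiff rfl rfl, ← char_sum p k ζ hζ _]
    calc ((∑ l : Fin n, (Finset.univ.filter
            fun ab : Fin (p ^ (k - 1)) × Fin (p ^ (k - 1)) =>
            ((ab.1 : ℕ) : ZMod (p ^ k)) - ((ab.2 : ℕ) : ZMod (p ^ k)) = δ l).card : ℕ) : ℂ)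
            * ((p ^ k : ℕ) : ℂ)
        = ∑ l : Fin n, (((Finset.univ.filter
            fun ab : Fin (p ^ (k - 1)) × Fin (p ^ (k - 1)) =>
            ((ab.1 : ℕ) : ZMod (p ^ k)) - ((ab.2 : ℕ) : ZMod (p ^ k)) = δ l).card : ℕ) : ℂ)
            * ((p ^ k : ℕ) : ℂ) := by rw [Nat.cast_sum, Finset.sum_mul]
      _ = ∑ l : Fin n, ∑ ab : Fin (p ^ (k - 1)) × Fin (p ^ (k - 1)),
            ∑ t : ZMod (p ^ k),
              ζ ^ (t * (δ l + ((ab.2 : ℕ) : ZMod (p ^ k)) - ((ab.1 : ℕ) : ZMod (p ^ k)))).val :=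
          Finset.sum_congr rfl fun l _ => step1 l
      _ = ∑ l : Fin n, ∑ t : ZMod (p ^ k),
            ∑ ab : Fin (p ^ (k - 1)) × Fin (p ^ (k - 1)),
              ζ ^ (t * (δ l + ((ab.2 : ℕ) : ZMod (p ^ k)) - ((ab.1 : ℕ) : ZMod (p ^ k)))).val :=
          Finset.sum_congr rfl fun l _ => Finset.sum_comm
      _ = ∑ t : ZMod (p ^ k), ∑ l : Fin n,
            ∑ ab : Fin (p ^ (k - 1)) × Fin (p ^ (k - 1)),
              ζ ^ (t * (δ l + ((ab.2 : ℕ) : ZMod (p ^ k)) - ((ab.1 : ℕ) : ZMod (p ^ k)))).val :=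
          Finset.sum_comm
      _ = ∑ t : ZMod (p ^ k), (∑ l : Fin n, ζ ^ (t * δ l).val) *
            (∑ ab : Fin (p ^ (k - 1)) × Fin (p ^ (k - 1)),
              ζ ^ (t * ((ab.2 : ℕ) : ZMod (p ^ k))).val
                * ζ ^ (t * (-((ab.1 : ℕ) : ZMod (p ^ k)))).val) := by
          refine Finset.sum_congr rfl fun t _ => ?_
          calc ∑ l : Fin n, ∑ ab : Fin (p ^ (k - 1)) × Fin (p ^ (k - 1)),
                ζ ^ (t * (δ l + ((ab.2 : ℕ) : ZMod (p ^ k)) - ((ab.1 : ℕ) : ZMod (p ^ k)))).val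
              = ∑ l : Fin n, ∑ ab : Fin (p ^ (k - 1)) × Fin (p ^ (k - 1)),
                ζ ^ (t * δ l).val * (ζ ^ (t * ((ab.2 : ℕ) : ZMod (p ^ k))).val
                  * ζ ^ (t * (-((ab.1 : ℕ) : ZMod (p ^ k)))).val) := by
                refine Finset.sum_congr rfl fun l _ => Finset.sum_congr rfl fun ab _ => ?_
                rw [show t * (δ l + ((ab.2 : ℕ) : ZMod (p ^ k)) - ((ab.1 : ℕ) : ZMod (p ^ k)))
                    = t * δ l + (t * ((ab.2 : ℕ) : ZMod (p ^ k))
                      + t * (-((ab.1 : ℕ) : ZMod (p ^ k)))) by ring, eadd, eadd]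
            _ = ∑ l : Fin n, ζ ^ (t * δ l).val *
                (∑ ab : Fin (p ^ (k - 1)) × Fin (p ^ (k - 1)),
                  ζ ^ (t * ((ab.2 : ℕ) : ZMod (p ^ k))).val
                    * ζ ^ (t * (-((ab.1 : ℕ) : ZMod (p ^ k)))).val) :=
                Finset.sum_congr rfl fun l _ => (Finset.mul_sum _ _ _).symm
            _ = _ := (Finset.sum_mul _ _ _).symm
      _ = (∑ l : Fin n, ζ ^ ((0 : ZMod (p ^ k)) * δ l).val) *
            (∑ ab : Fin (p ^ (k - 1)) × Fin (p ^ (k - 1)),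
              ζ ^ ((0 : ZMod (p ^ k)) * ((ab.2 : ℕ) : ZMod (p ^ k))).val
                * ζ ^ ((0 : ZMod (p ^ k)) * (-((ab.1 : ℕ) : ZMod (p ^ k)))).val) := by
          refine Finset.sum_eq_single_of_mem 0 (Finset.mem_univ _) fun t _ ht0 => ?_
          by_cases hptv : p ∣ t.val
          · have hcol := col_sum_zero p k ζ hk1 hζ t ht0 hptv
            have hzero : (∑ ab : Fin (p ^ (k - 1)) × Fin (p ^ (k - 1)),
                ζ ^ (t * ((ab.2 : ℕ) : ZMod (p ^ k))).val
                  * ζ ^ (t * (-((ab.1 : ℕ) : ZMod (p ^ k)))).val) = 0 := by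
              rw [Fintype.sum_prod_type]
              refine Finset.sum_eq_zero fun a _ => ?_
              simp only [Prod.fst, Prod.snd]
              rw [← Finset.sum_mul, hcol, zero_mul]
            rw [hzero, mul_zero]
          · rw [row_sum_zero p k ζ hp hζ δ h1 t hptv, zero_mul]
      _ = (n : ℂ) * (((p ^ (k - 1) : ℕ) : ℂ) * ((p ^ (k - 1) : ℕ) : ℂ)) := by
          simp only [zero_mul, ZMod.val_zero, pow_zero, mul_one, one_mul]
          rw [Finset.sum_const, Finset.sum_const, Finset.card_univ, Finset.card_univ]
          simp only [Fintype.card_prod, Fintype.card_fin, nsmul_eq_mul, Nat.cast_mul]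
          push_cast
          ring
  have hpow : p ^ (k - 2) * p ^ k = p ^ (k - 1) * p ^ (k - 1) := by
    rw [← pow_add, ← pow_add]; congr 1; omega
  have hc : (((∑ l : Fin n, (Finset.univ.filter
        fun ab : Fin (p ^ (k - 1)) × Fin (p ^ (k - 1)) =>
        ((ab.1 : ℕ) : ZMod (p ^ k)) - ((ab.2 : ℕ) : ZMod (p ^ k)) = δ l).card) * p ^ k : ℕ) : ℂ)
      = (((n * p ^ (k - 2)) * p ^ k : ℕ) : ℂ) := by
    rw [Nat.cast_mul, key]
    rw [show (n * p ^ (k - 2)) * p ^ k = n * (p ^ (k - 2) * p ^ k) by ring, hpow]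
    push_cast
    ring
  have hnat := Nat.cast_injective hc
  exact Nat.eq_of_mul_eq_mul_right hMpos hnat

theorem stmt16 (p k n : ℕ) (hp : p.Prime) (hodd : 2 < p) (hk : 2 ≤ k) (hn : 0 < n)
    [NeZero (p ^ k)] (ζ : ℂ) (hζ : IsPrimitiveRoot ζ (p ^ k))
    (A : Matrix (Fin n) (Fin n) (ZMod (p ^ k)))
    (hBH : ∀ i j, (∑ l, ζ ^ (A i l).val * star (ζ ^ (A j l).val))
        = if i = j then (n : ℂ) else 0)
    (hnorm : ∀ i j : Fin n, A i ⟨0, hn⟩ = 0 ∧ A ⟨0, hn⟩ j = 0) :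
    ∀ i j : Fin n, i ≠ j →
      hammingDist (fun q : Fin n × Fin (p ^ (k - 1)) => G2 p k (A i q.1) q.2)
          (fun q : Fin n × Fin (p ^ (k - 1)) => G2 p k (A j q.1) q.2)
        = n * (p - 1) * p ^ (k - 2) := by
  intro i j hij
  have hk1 : 1 ≤ k := by omega
  have hp0 : 0 < p := hp.pos
  have hm0 : 0 < p ^ (k - 1) := pow_pos hp0 _
  have hζ0 : ζ ≠ 0 := by
    intro h
    have := hζ.pow_eq_one
    rw [h, zero_pow (NeZero.ne (p ^ k))] at this
    exact zero_ne_one this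
  have habs : ‖ζ‖ = 1 := Complex.norm_eq_one_of_pow_eq_one hζ.pow_eq_one (NeZero.ne (p ^ k))
  have eadd : ∀ x y : ZMod (p ^ k), ζ ^ (x + y).val = ζ ^ x.val * ζ ^ y.val := fun x y => by
    rw [ZMod.val_add, ← pow_eq_pow_mod _ hζ.pow_eq_one, pow_add]
  have hterm : ∀ u v : ZMod (p ^ k), ζ ^ u.val * star (ζ ^ v.val) = ζ ^ (u - v).val := by
    intro u v
    have hvz : ζ ^ v.val ≠ 0 := pow_ne_zero _ hζ0
    have hnv : ‖ζ ^ v.val‖ = 1 := by rw [norm_pow, habs, one_pow]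
    have hst : star (ζ ^ v.val) = (ζ ^ v.val)⁻¹ := by rw [Complex.inv_eq_conj hnv]; rfl
    rw [hst, mul_inv_eq_iff_eq_mul₀ hvz, ← eadd, sub_add_cancel]
  have hsum : ∑ l, ζ ^ ((A i l - A j l).val) = 0 := by
    have h0 := hBH i j
    rw [if_neg hij] at h0
    calc ∑ l, ζ ^ ((A i l - A j l).val)
        = ∑ l, ζ ^ (A i l).val * star (ζ ^ (A j l).val) :=
          Finset.sum_congr rfl fun l _ => (hterm _ _).symm
      _ = 0 := h0
  have hN := sum_pairs p k n hp hk ζ hζ (fun l => A i l - A j l) hsum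
  -- unfold hamming distance into per-column counts
  have hD : hammingDist (fun q : Fin n × Fin (p ^ (k - 1)) => G2 p k (A i q.1) q.2)
      (fun q : Fin n × Fin (p ^ (k - 1)) => G2 p k (A j q.1) q.2)
      = ∑ l : Fin n, (Finset.univ.filter
          fun t : Fin (p ^ (k - 1)) => ¬ (G2 p k (A i l) t = G2 p k (A j l) t)).card := by
    rw [hammingDist, Finset.card_filter, Fintype.sum_prod_type]
    exact Finset.sum_congr rfl fun l _ => (Finset.card_filter _ _).symm
  have hE : ∀ l : Fin n, (Finset.univ.filter
      fun t : Fin (p ^ (k - 1)) => G2 p k (A i l) t = G2 p k (A j l) t).card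
      = (Finset.univ.filter fun ab : Fin (p ^ (k - 1)) × Fin (p ^ (k - 1)) =>
          ((ab.1 : ℕ) : ZMod (p ^ k)) - ((ab.2 : ℕ) : ZMod (p ^ k)) = A i l - A j l).card :=
    fun l => count_eq p k hk1 (A i l) (A j l)
  have hcomp : ∀ l : Fin n, (Finset.univ.filter
      fun t : Fin (p ^ (k - 1)) => ¬ (G2 p k (A i l) t = G2 p k (A j l) t)).card
      + (Finset.univ.filter
      fun t : Fin (p ^ (k - 1)) => G2 p k (A i l) t = G2 p k (A j l) t).card
      = p ^ (k - 1) := by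
    intro l
    have := Finset.card_filter_add_card_filter_not (s := (Finset.univ : Finset (Fin (p ^ (k - 1)))))
      (p := fun t => G2 p k (A i l) t = G2 p k (A j l) t)
    rw [Finset.card_univ, Fintype.card_fin] at this
    omega
  -- sum everything
  have hsplit : (∑ l : Fin n, (Finset.univ.filter
      fun t : Fin (p ^ (k - 1)) => ¬ (G2 p k (A i l) t = G2 p k (A j l) t)).card)
      + (∑ l : Fin n, (Finset.univ.filter
      fun t : Fin (p ^ (k - 1)) => G2 p k (A i l) t = G2 p k (A j l) t).card)
      = n * p ^ (k - 1) := by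
    rw [← Finset.sum_add_distrib]
    calc ∑ l : Fin n, ((Finset.univ.filter
          fun t : Fin (p ^ (k - 1)) => ¬ (G2 p k (A i l) t = G2 p k (A j l) t)).card
          + (Finset.univ.filter
          fun t : Fin (p ^ (k - 1)) => G2 p k (A i l) t = G2 p k (A j l) t).card)
        = ∑ _l : Fin n, p ^ (k - 1) := Finset.sum_congr rfl fun l _ => hcomp l
      _ = n * p ^ (k - 1) := by rw [Finset.sum_const, Finset.card_univ, Fintype.card_fin,
            smul_eq_mul]
  have hEsum : (∑ l : Fin n, (Finset.univ.filter
      fun t : Fin (p ^ (k - 1)) => G2 p k (A i l) t = G2 p k (A j l) t).card)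
      = n * p ^ (k - 2) := by
    rw [Finset.sum_congr rfl fun l _ => hE l]
    exact hN
  have hpow1 : n * (p - 1) * p ^ (k - 2) + n * p ^ (k - 2) = n * p ^ (k - 1) := by
    have h1 : p ^ (k - 2) * p = p ^ (k - 1) := by
      rw [← pow_succ]; congr 1; omega
    calc n * (p - 1) * p ^ (k - 2) + n * p ^ (k - 2)
        = n * p ^ (k - 2) * ((p - 1) + 1) := by ring
      _ = n * p ^ (k - 2) * p := by congr 1; omega
      _ = n * (p ^ (k - 2) * p) := by ring
      _ = n * p ^ (k - 1) := by rw [h1]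
  rw [hD]
  omega
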